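/- Let η > 0, let V₁ ∈ C²(ℝ) and V₂ ∈ C¹(ℝ) satisfy either (V₁' ≤ 0 and V₂' ≥ 0) or (V₁' ≥ 0 and V₂' ≤ 0), and additionally V₁'' ≤ 0. Let q be a nonnegative, twice continuously differentiable solution of ∂_t q(t,x) + ∂_x( V₁(W(t,x)) q(t,x) ) = 0 with W(t,x) := (1/η) ∫_x^{x+η} V₂(q(t,y)) dy. Fix a time t and a point x̃ such that ∂_x q(t,x) ≥ 0 for all x ∈ ℝ, ∂_x q(t,x̃) = 0, and ∂_x² q(t,x̃) = 0. Then ∂_t ∂_x q(t,x̃) ≥ 0; i.e. the dynamics preserve monotonically increasing profiles. -/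

import Mathlib

open MeasureTheory Set

/-- The moving-average nonlocal term `W(t,x) = (1/η) ∫_x^{x+η} V₂(q(t,y)) dy`. -/
noncomputable def movingAvgW (η : ℝ) (V₂ : ℝ → ℝ) (q : ℝ × ℝ → ℝ) (t x : ℝ) : ℝ :=
  (1 / η) * ∫ y in x..(x + η), V₂ (q (t, y))

/-- **Preservation of monotonically increasing profiles.**
Let `V₁ ∈ C²`, `V₂ ∈ C¹` satisfy either (`V₁' ≤ 0` and `V₂' ≥ 0`) or (`V₁' ≥ 0` and
`V₂' ≤ 0`) together with `V₁'' ≤ 0`, and let `q ≥ 0` be a `C²` solution of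
`∂ₜ q + ∂ₓ(V₁(W) q) = 0` with `W(t,x) = (1/η) ∫_x^{x+η} V₂(q(t,y)) dy`. If at time `t` the
profile satisfies `∂ₓ q(t,·) ≥ 0` everywhere and `∂ₓ q(t,x₀) = 0`, `∂ₓ² q(t,x₀) = 0`, then
`∂ₜ ∂ₓ q(t,x₀) ≥ 0`. -/
theorem monotone_increasing_preserved
    (η : ℝ) (hη : 0 < η) (q : ℝ × ℝ → ℝ) (V₁ V₂ : ℝ → ℝ)
    (hV₁ : ContDiff ℝ 2 V₁) (hV₂ : ContDiff ℝ 1 V₂)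
    (hsign : ((∀ x, deriv V₁ x ≤ 0) ∧ (∀ x, 0 ≤ deriv V₂ x)) ∨
             ((∀ x, 0 ≤ deriv V₁ x) ∧ (∀ x, deriv V₂ x ≤ 0)))
    (hV₁'' : ∀ x, deriv (deriv V₁) x ≤ 0)
    (hq_smooth : ContDiff ℝ 2 q)
    (hq_nonneg : ∀ t x : ℝ, 0 ≤ q (t, x))
    (hPDE : ∀ t x : ℝ,
      deriv (fun s => q (s, x)) t
        + deriv (fun y => V₁ (movingAvgW η V₂ q t y) * q (t, y)) x = 0)
    (t x₀ : ℝ)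
    (hinc : ∀ x : ℝ, 0 ≤ deriv (fun y => q (t, y)) x)
    (hcrit : deriv (fun y => q (t, y)) x₀ = 0)
    (hcrit2 : deriv (deriv (fun y => q (t, y))) x₀ = 0) :
    0 ≤ deriv (fun s => deriv (fun y => q (s, y)) x₀) t := by
  have h12 : (1 : WithTop ℕ∞) ≤ 2 := by norm_num
  -- the profile at time `t`
  set u : ℝ → ℝ := fun y => q (t, y) with hu_def
  have hu : ContDiff ℝ 2 u := hq_smooth.comp (contDiff_const.prodMk contDiff_id)
  have hudiff : Differentiable ℝ u := hu.differentiable (by norm_num)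
  set u' : ℝ → ℝ := deriv u with hu'_def
  have hu' : ∀ y, HasDerivAt u (u' y) y := fun y => (hudiff y).hasDerivAt
  have hu'c : ContDiff ℝ 1 u' := by
    have : ContDiff ℝ (1 + 1) u := by norm_num; exact hu
    exact (contDiff_succ_iff_deriv.mp this).2.2
  have hu'' : HasDerivAt u' (deriv u' x₀) x₀ :=
    ((hu'c.differentiable (by norm_num)) x₀).hasDerivAt
  -- V₁ derivatives
  have hV₁d : ∀ x, HasDerivAt V₁ (deriv V₁ x) x :=
    fun x => ((hV₁.differentiable (by norm_num)) x).hasDerivAt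
  have hV₁'c : ContDiff ℝ 1 (deriv V₁) := by
    have : ContDiff ℝ (1 + 1) V₁ := by norm_num; exact hV₁
    exact (contDiff_succ_iff_deriv.mp this).2.2
  have hV₁d2 : ∀ x, HasDerivAt (deriv V₁) (deriv (deriv V₁) x) x :=
    fun x => ((hV₁'c.differentiable (by norm_num)) x).hasDerivAt
  -- V₂ derivative
  have hV₂d : ∀ x, HasDerivAt V₂ (deriv V₂ x) x :=
    fun x => ((hV₂.differentiable (by norm_num)) x).hasDerivAt
  -- the integrand of the nonlocal term and its derivative
  set h : ℝ → ℝ := fun z => V₂ (u z) with hh_def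
  have hhc : Continuous h := hV₂.continuous.comp (hu.continuous)
  have hhd : ∀ z, HasDerivAt h (deriv V₂ (u z) * u' z) z :=
    fun z => (hV₂d (u z)).comp z (hu' z)
  -- antiderivative
  set H : ℝ → ℝ := fun y => ∫ z in (0:ℝ)..y, h z with hH_def
  have hHd : ∀ y, HasDerivAt H (h y) y :=
    fun y => (hhc.integral_hasStrictDerivAt 0 y).hasDerivAt
  -- the nonlocal term as a function of x, at fixed time t
  have hWeq : (fun y => movingAvgW η V₂ q t y) = fun y => (1 / η) * (H (y + η) - H y) := by
    funext y
    have hsplit := intervalIntegral.integral_add_adjacent_intervals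
      (hhc.intervalIntegrable (μ := volume) 0 y) (hhc.intervalIntegrable (μ := volume) y (y + η))
    have hval : H (y + η) - H y = ∫ z in y..(y + η), h z := by
      simp only [hH_def]; linarith
    show (1 / η) * ∫ z in y..(y + η), h z = (1 / η) * (H (y + η) - H y)
    rw [hval]
  -- derivative of the shifted antiderivative
  have hshift : ∀ y : ℝ, HasDerivAt (fun z => H (z + η)) (h (y + η)) y := by
    intro y
    have := (hHd (y + η)).comp y ((hasDerivAt_id y).add_const η)
    rw [mul_one] at this
    exact this
  set W' : ℝ → ℝ := fun y => (1 / η) * (h (y + η) - h y) with hW'_def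
  have hW : ∀ y, HasDerivAt (fun z => movingAvgW η V₂ q t z) (W' y) y := by
    intro y
    rw [hWeq]
    exact ((hshift y).sub (hHd y)).const_mul (1 / η)
  -- second derivative of the nonlocal term at x₀
  have hshift' : HasDerivAt (fun z => h (z + η)) (deriv V₂ (u (x₀ + η)) * u' (x₀ + η)) x₀ := by
    have := (hhd (x₀ + η)).comp x₀ ((hasDerivAt_id x₀).add_const η)
    rw [mul_one] at this
    exact this
  have hW'd : HasDerivAt W'
      ((1 / η) * ((deriv V₂ (u (x₀ + η)) * u' (x₀ + η)) - deriv V₂ (u x₀) * u' x₀)) x₀ :=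
    (hshift'.sub (hhd x₀)).const_mul (1 / η)
  -- abbreviation for the nonlocal term
  set Wv : ℝ → ℝ := fun y => movingAvgW η V₂ q t y with hWv_def
  -- the flux and its spatial derivative
  set G' : ℝ → ℝ := fun y => deriv V₁ (Wv y) * W' y * u y + V₁ (Wv y) * u' y with hG'_def
  have hG : ∀ y, HasDerivAt (fun z => V₁ (movingAvgW η V₂ q t z) * q (t, z)) (G' y) y := by
    intro y
    exact (((hV₁d (Wv y)).comp y (hW y)).mul (hu' y))
  -- from the PDE: the time derivative of q equals -G'
  have hPDE' : ∀ y : ℝ, deriv (fun s => q (s, y)) t = -G' y := by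
    intro y
    have := hPDE t y
    rw [(hG y).deriv] at this
    linarith
  -- second spatial derivative of the flux at x₀
  set S : ℝ :=
    ((deriv (deriv V₁) (Wv x₀) * W' x₀) * W' x₀
        + deriv V₁ (Wv x₀)
          * ((1 / η) * ((deriv V₂ (u (x₀ + η)) * u' (x₀ + η)) - deriv V₂ (u x₀) * u' x₀)))
      * u x₀
      + (deriv V₁ (Wv x₀) * W' x₀) * u' x₀
      + ((deriv V₁ (Wv x₀) * W' x₀) * u' x₀ + V₁ (Wv x₀) * deriv u' x₀) with hS_def
  have hG'd : HasDerivAt G' S x₀ := by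
    have hA : HasDerivAt (fun y => deriv V₁ (Wv y)) (deriv (deriv V₁) (Wv x₀) * W' x₀) x₀ :=
      (hV₁d2 (Wv x₀)).comp x₀ (hW x₀)
    have hB : HasDerivAt (fun y => deriv V₁ (Wv y) * W' y)
        (deriv (deriv V₁) (Wv x₀) * W' x₀ * W' x₀
          + deriv V₁ (Wv x₀)
            * ((1 / η) * ((deriv V₂ (u (x₀ + η)) * u' (x₀ + η)) - deriv V₂ (u x₀) * u' x₀))) x₀ :=
      hA.mul hW'd
    have hC : HasDerivAt (fun y => deriv V₁ (Wv y) * W' y * u y)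
        ((deriv (deriv V₁) (Wv x₀) * W' x₀ * W' x₀
          + deriv V₁ (Wv x₀)
            * ((1 / η) * ((deriv V₂ (u (x₀ + η)) * u' (x₀ + η)) - deriv V₂ (u x₀) * u' x₀)))
          * u x₀
          + (deriv V₁ (Wv x₀) * W' x₀) * u' x₀) x₀ := hB.mul (hu' x₀)
    have hD : HasDerivAt (fun y => V₁ (Wv y) * u' y)
        ((deriv V₁ (Wv x₀) * W' x₀) * u' x₀ + V₁ (Wv x₀) * deriv u' x₀) x₀ :=
      ((hV₁d (Wv x₀)).comp x₀ (hW x₀)).mul hu''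
    exact hC.add hD
  -- S is nonpositive at x₀
  have hu'x₀ : u' x₀ = 0 := hcrit
  have hu''x₀ : deriv u' x₀ = 0 := hcrit2
  have hScomp : S = deriv (deriv V₁) (Wv x₀) * W' x₀ * W' x₀ * u x₀
      + deriv V₁ (Wv x₀) * ((1 / η) * (deriv V₂ (u (x₀ + η)) * u' (x₀ + η))) * u x₀ := by
    rw [hS_def, hu'x₀, hu''x₀]; ring
  have hS_nonpos : S ≤ 0 := by
    rw [hScomp]
    have h1 : deriv (deriv V₁) (Wv x₀) * W' x₀ * W' x₀ * u x₀ ≤ 0 := by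
      have ha : deriv (deriv V₁) (Wv x₀) * (W' x₀ * W' x₀) ≤ 0 :=
        mul_nonpos_of_nonpos_of_nonneg (hV₁'' _) (mul_self_nonneg _)
      calc deriv (deriv V₁) (Wv x₀) * W' x₀ * W' x₀ * u x₀
          = (deriv (deriv V₁) (Wv x₀) * (W' x₀ * W' x₀)) * u x₀ := by ring
        _ ≤ 0 := mul_nonpos_of_nonpos_of_nonneg ha (hq_nonneg t x₀)
    have h2 : deriv V₁ (Wv x₀) * ((1 / η) * (deriv V₂ (u (x₀ + η)) * u' (x₀ + η))) * u x₀ ≤ 0 := by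
      have hmul : deriv V₁ (Wv x₀) * deriv V₂ (u (x₀ + η)) ≤ 0 := by
        rcases hsign with ⟨h1', h2'⟩ | ⟨h1', h2'⟩
        · exact mul_nonpos_of_nonpos_of_nonneg (h1' _) (h2' _)
        · exact mul_nonpos_of_nonneg_of_nonpos (h1' _) (h2' _)
      have hη' : 0 ≤ 1 / η := by positivity
      have hu'pos : 0 ≤ u' (x₀ + η) := hinc (x₀ + η)
      have hb : deriv V₁ (Wv x₀) * deriv V₂ (u (x₀ + η)) * u' (x₀ + η) ≤ 0 :=
        mul_nonpos_of_nonpos_of_nonneg hmul hu'pos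
      calc deriv V₁ (Wv x₀) * ((1 / η) * (deriv V₂ (u (x₀ + η)) * u' (x₀ + η))) * u x₀
          = (1 / η) * ((deriv V₁ (Wv x₀) * deriv V₂ (u (x₀ + η)) * u' (x₀ + η)) * u x₀) := by
            ring
        _ ≤ 0 := mul_nonpos_of_nonneg_of_nonpos hη'
            (mul_nonpos_of_nonpos_of_nonneg hb (hq_nonneg t x₀))
    linarith
  -- Clairaut: exchange the order of derivatives
  set f' : ℝ × ℝ → (ℝ × ℝ →L[ℝ] ℝ) := fderiv ℝ q with hf'_def
  have hf' : ∀ p, HasFDerivAt q (f' p) p :=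
    fun p => ((hq_smooth.differentiable (by norm_num)) p).hasFDerivAt
  have hf'c : ContDiff ℝ 1 f' := hq_smooth.fderiv_right (by norm_num)
  set f'' : ℝ × ℝ →L[ℝ] (ℝ × ℝ →L[ℝ] ℝ) := fderiv ℝ f' (t, x₀) with hf''_def
  have hf''d : HasFDerivAt f' f'' (t, x₀) := ((hf'c.differentiable (by norm_num)) (t, x₀)).hasFDerivAt
  have hsymm : ∀ v w : ℝ × ℝ, f'' v w = f'' w v :=
    second_derivative_symmetric hf' hf''d
  -- partial derivative identities
  have hx_part : ∀ s x : ℝ, deriv (fun y => q (s, y)) x = f' (s, x) (0, 1) := by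
    intro s x
    exact ((hf' (s, x)).comp_hasDerivAt x
      ((hasDerivAt_const x s).prodMk (hasDerivAt_id x))).deriv
  have ht_part : ∀ s x : ℝ, deriv (fun s' => q (s', x)) s = f' (s, x) (1, 0) := by
    intro s x
    exact ((hf' (s, x)).comp_hasDerivAt s
      ((hasDerivAt_id s).prodMk (hasDerivAt_const s x))).deriv
  -- LHS equals f'' (1,0) (0,1)
  have hLHS : deriv (fun s => deriv (fun y => q (s, y)) x₀) t = f'' (1, 0) (0, 1) := by
    have heq : (fun s => deriv (fun y => q (s, y)) x₀) = fun s => f' (s, x₀) (0, 1) :=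
      funext fun s => hx_part s x₀
    rw [heq]
    have hclm : HasDerivAt (fun s => f' (s, x₀)) (f'' (1, 0)) t :=
      hf''d.comp_hasDerivAt t ((hasDerivAt_id t).prodMk (hasDerivAt_const t x₀))
    have := hclm.clm_apply (hasDerivAt_const t ((0 : ℝ), (1 : ℝ)))
    simpa using this.deriv
  -- the mixed derivative in the other order equals -S
  have hRHS : f'' (0, 1) (1, 0) = -S := by
    have hclm : HasDerivAt (fun y => f' (t, y)) (f'' (0, 1)) x₀ :=
      hf''d.comp_hasDerivAt x₀ ((hasDerivAt_const x₀ t).prodMk (hasDerivAt_id x₀))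
    have hg : HasDerivAt (fun y => f' (t, y) (1, 0)) (f'' (0, 1) (1, 0)) x₀ := by
      have := hclm.clm_apply (hasDerivAt_const x₀ ((1 : ℝ), (0 : ℝ)))
      simpa using this
    have hfun : (fun y => f' (t, y) ((1 : ℝ), (0 : ℝ))) = fun y => -G' y := by
      funext y
      rw [← ht_part t y, hPDE' y]
    rw [hfun] at hg
    exact hg.unique hG'd.neg
  rw [hLHS, hsymm (1, 0) (0, 1), hRHS]
  linarith
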